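/- Let G be a topological group possessing a strong q-point and H a closed subgroup of G. Then there exist a metrizable space M and a continuous open and closed mapping f : G/H → M such that f⁻¹(F) is sequentially compact for every sequentially compact subset F of M. -/

import Mathlib

open Filter Topology Set Uniformity

universe u

section Aux
variable {G : Type u} [Group G] [TopologicalSpace G] [IsTopologicalGroup G]

lemma q16_step (s : Set G) (hso : IsOpen s) (hs1 : (1:G) ∈ s) :
    ∃ t : Set G, (IsOpen t ∧ (1:G) ∈ t) ∧ (∀ a ∈ t, a⁻¹ ∈ t) ∧ ∀ a ∈ t, ∀ b ∈ t, a * b ∈ s := by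
  obtain ⟨t, hto, ht1, htmul⟩ := exists_open_nhds_one_mul_subset (hso.mem_nhds hs1)
  refine ⟨t ∩ t⁻¹, ⟨hto.inter hto.inv, ⟨ht1, by simpa using ht1⟩⟩, ?_, ?_⟩
  · rintro a ⟨h1, h2⟩
    exact ⟨h2, by simpa using h1⟩
  · rintro a ⟨ha, -⟩ b ⟨hb, -⟩
    exact htmul (Set.mul_mem_mul ha hb)

lemma q16_V (W : ℕ → Set G) (hWo : ∀ n, IsOpen (W n)) (hW1 : ∀ n, (1:G) ∈ W n) :
    ∃ V : ℕ → Set G, (∀ n, IsOpen (V n)) ∧ (∀ n, (1:G) ∈ V n) ∧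
      (∀ n, ∀ a ∈ V n, a⁻¹ ∈ V n) ∧
      (∀ n, ∀ a ∈ V (n+1), ∀ b ∈ V (n+1), a * b ∈ V n) ∧
      (∀ n, V n ⊆ W n) ∧ (∀ n, V (n+1) ⊆ V n) := by
  choose T hT hTinv hTmul using fun (p : {s : Set G // IsOpen s ∧ (1:G) ∈ s}) =>
    q16_step p.1 p.2.1 p.2.2
  let step : {s : Set G // IsOpen s ∧ (1:G) ∈ s} → {s : Set G // IsOpen s ∧ (1:G) ∈ s} :=
    fun p => ⟨T p, hT p⟩
  let F : ℕ → {s : Set G // IsOpen s ∧ (1:G) ∈ s} :=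
    fun n => Nat.rec (step ⟨W 0, hWo 0, hW1 0⟩)
      (fun n prev => step ⟨prev.1 ∩ W (n+1), prev.2.1.inter (hWo (n+1)), prev.2.2, hW1 (n+1)⟩) n
  have hF0 : F 0 = step ⟨W 0, hWo 0, hW1 0⟩ := rfl
  have hFs : ∀ n, F (n+1) =
      step ⟨(F n).1 ∩ W (n+1), (F n).2.1.inter (hWo (n+1)), (F n).2.2, hW1 (n+1)⟩ :=
    fun n => rfl
  have hFrep : ∀ n, ∃ p, F n = step p := by
    intro n
    cases n with
    | zero => exact ⟨_, hF0⟩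
    | succ n => exact ⟨_, hFs n⟩
  refine ⟨fun n => (F n).1, fun n => (F n).2.1, fun n => (F n).2.2, ?_, ?_, ?_, ?_⟩
  · intro n a ha
    change a ∈ (F n).1 at ha
    change a⁻¹ ∈ (F n).1
    obtain ⟨p, hp⟩ := hFrep n
    rw [hp] at ha ⊢
    exact hTinv p a ha
  · intro n a ha b hb
    change a ∈ (F (n+1)).1 at ha
    change b ∈ (F (n+1)).1 at hb
    change a * b ∈ (F n).1
    rw [hFs n] at ha hb
    exact (hTmul _ a ha b hb).1
  · intro n a ha
    change a ∈ (F n).1 at ha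
    cases n with
    | zero =>
        rw [hF0] at ha
        have := hTmul _ a ha 1 (hT _).2
        simpa using this
    | succ n =>
        rw [hFs n] at ha
        have := hTmul _ a ha 1 (hT _).2
        rw [mul_one] at this
        exact this.2
  · intro n a ha
    change a ∈ (F (n+1)).1 at ha
    change a ∈ (F n).1
    rw [hFs n] at ha
    have := hTmul _ a ha 1 (hT _).2
    rw [mul_one] at this
    exact this.1

end Aux

theorem q16_main {G : Type u} [Group G] [TopologicalSpace G] [IsTopologicalGroup G]
    (V : ℕ → Set G)
    (hVo : ∀ n, IsOpen (V n)) (hV1 : ∀ n, (1:G) ∈ V n)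
    (hVinv : ∀ n, ∀ a ∈ V n, a⁻¹ ∈ V n)
    (hVmul : ∀ n, ∀ a ∈ V (n+1), ∀ b ∈ V (n+1), a * b ∈ V n)
    (hVanti : ∀ {m n}, m ≤ n → V n ⊆ V m)
    (seqV : ∀ v : ℕ → G, (∀ n, v n ∈ V n) →
      ∃ φ : ℕ → ℕ, StrictMono φ ∧ ∃ p, (∀ n, p ∈ V n) ∧ Tendsto (v ∘ φ) atTop (𝓝 p))
    (H : Subgroup G) (hH : IsClosed (H : Set G)) :
    ∃ (M : Type u) (_ : TopologicalSpace M) (_ : TopologicalSpace.MetrizableSpace M)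
      (f : G ⧸ H → M), Continuous f ∧ IsOpenMap f ∧ IsClosedMap f ∧
        ∀ F : Set M, IsSeqCompact F → IsSeqCompact (f ⁻¹' F) := by
  classical
  -- the double-coset relation
  set R : G → G → Prop := fun a b => ∃ k, (∀ n, k ∈ V n) ∧ ∃ h ∈ H, b = k * a * h with hRdef
  have hR_refl : ∀ a, R a a := fun a => ⟨1, fun n => hV1 n, 1, H.one_mem, by group⟩
  have hR_symm : ∀ {a b}, R a b → R b a := by
    rintro a b ⟨k, hk, h, hh, rfl⟩
    exact ⟨k⁻¹, fun n => hVinv n k (hk n), h⁻¹, H.inv_mem hh, by group⟩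
  have hR_trans : ∀ {a b c}, R a b → R b c → R a c := by
    rintro a b c ⟨k, hk, h, hh, rfl⟩ ⟨k', hk', h', hh', rfl⟩
    exact ⟨k' * k, fun n => hVmul n k' (hk' (n+1)) k (hk (n+1)), h * h',
      H.mul_mem hh hh', by group⟩
  let s : Setoid G := ⟨R, fun a => hR_refl a, fun h => hR_symm h, fun h h' => hR_trans h h'⟩
  let Q : G → Quotient s := Quotient.mk s
  have hQ_eq : ∀ {a b}, R a b → Q a = Q b := fun h => Quotient.sound h
  have hQ_exact : ∀ {a b}, Q a = Q b → R a b := fun h => Quotient.exact h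
  have hQM : IsQuotientMap Q := isQuotientMap_quotient_mk'
  -- the entourages
  set D : ℕ → Set (Quotient s × Quotient s) := fun n =>
    {z | ∃ g g', z.1 = Q g ∧ z.2 = Q g' ∧ ∃ v ∈ V n, ∃ h ∈ H, g' = v * g * h} with hDdef
  have hD_anti : ∀ {m n}, m ≤ n → D n ⊆ D m := by
    rintro m n hmn z ⟨g, g', h1, h2, v, hv, h, hh, rfl⟩
    exact ⟨g, _, h1, h2, v, hVanti hmn hv, h, hh, rfl⟩
  have hD_refl : ∀ n z, (z, z) ∈ D n := by
    intro n z
    obtain ⟨g, rfl⟩ := Quotient.exists_rep z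
    exact ⟨g, g, rfl, rfl, 1, hV1 n, 1, H.one_mem, by group⟩
  have hD_symm : ∀ n z, z ∈ D n → Prod.swap z ∈ D n := by
    rintro n z ⟨g, g', h1, h2, v, hv, h, hh, rfl⟩
    exact ⟨v * g * h, g, h2, h1, v⁻¹, hVinv n v hv, h⁻¹, H.inv_mem hh, by group⟩
  -- representative lemmas
  have hD_rep : ∀ n g z', (Q g, z') ∈ D (n+1) → ∃ v ∈ V n, ∃ h ∈ H, z' = Q (v * g * h) := by
    rintro n g z' ⟨a, a', (ha : Q g = Q a), (ha' : z' = Q a'), v, hv, h, hh, rfl⟩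
    obtain ⟨k, hk, h₁, hh₁, rfl⟩ := hQ_exact ha
    refine ⟨v * k, hVmul n v hv k (hk (n+1)), h₁ * h, H.mul_mem hh₁ hh, ?_⟩
    rw [ha']
    exact congrArg Q (by group)
  have hD_rep2 : ∀ n g g', (Q g, Q g') ∈ D (n+2) →
      ∃ v ∈ V n, ∃ h ∈ H, g' = v * g * h := by
    intro n g g' hmem
    obtain ⟨v, hv, h, hh, heq⟩ := hD_rep (n+1) g (Q g') hmem
    obtain ⟨k, hk, h₂, hh₂, heq2⟩ := hQ_exact heq
    refine ⟨k⁻¹ * v, hVmul n k⁻¹ (hVinv (n+1) k (hk (n+1))) v hv, h * h₂⁻¹,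
      H.mul_mem hh (H.inv_mem hh₂), ?_⟩
    have hg' : g' = k⁻¹ * (k * g' * h₂) * h₂⁻¹ := by group
    rw [hg', ← heq2]; group
  -- the uniformity
  set 𝒰 : Filter (Quotient s × Quotient s) := ⨅ n, 𝓟 (D n) with h𝒰def
  have hbasis : 𝒰.HasBasis (fun _ : ℕ => True) D :=
    hasBasis_iInf_principal
      (fun m n => ⟨max m n, hD_anti (le_max_left m n), hD_anti (le_max_right m n)⟩)
  have hDmem : ∀ n, D n ∈ 𝒰 := fun n => hbasis.mem_of_mem trivial
  let core : UniformSpace.Core (Quotient s) := UniformSpace.Core.mk' 𝒰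
    (by
      intro r hr x
      obtain ⟨n, -, hn⟩ := hbasis.mem_iff.1 hr
      exact hn (hD_refl n x))
    (by
      intro r hr
      obtain ⟨n, -, hn⟩ := hbasis.mem_iff.1 hr
      exact mem_of_superset (hDmem n) (fun z hz => hn (hD_symm n z hz)))
    (by
      intro r hr
      obtain ⟨n, -, hn⟩ := hbasis.mem_iff.1 hr
      refine ⟨D (n+2), hDmem (n+2), ?_⟩
      rintro ⟨x, z⟩ ⟨y, hxy, hyz⟩
      obtain ⟨a, a', (hx : x = Q a), -, -⟩ := id hxy
      subst hx
      obtain ⟨v, hv, h, hh, rfl⟩ := hD_rep (n+1) a y hxy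
      obtain ⟨v', hv', h', hh', rfl⟩ := hD_rep (n+1) _ z hyz
      apply hn
      refine ⟨a, (v' * v) * a * (h * h'), rfl, ?_, v' * v,
        hVmul n v' (hVanti (by omega) hv') v (hVanti (by omega) hv), h * h',
        H.mul_mem hh hh', rfl⟩
      exact congrArg Q (by group))
  -- full saturations
  have hsatur : ∀ T : Set G, Q ⁻¹' (Q '' T) = {w | ∃ k, (∀ n, k ∈ V n) ∧
      ∃ c ∈ T, ∃ h ∈ H, w = k * c * h} := by
    intro T
    ext w
    constructor
    · rintro ⟨c, hc, hcw⟩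
      obtain ⟨k, hk, h, hh, rfl⟩ := hQ_exact hcw
      exact ⟨k, hk, c, hc, h, hh, rfl⟩
    · rintro ⟨k, hk, c, hc, h, hh, rfl⟩
      exact ⟨c, hc, hQ_eq ⟨k, hk, h, hh, rfl⟩⟩
  have hsatur_open : ∀ T : Set G, IsOpen T → IsOpen (Q ⁻¹' (Q '' T)) := by
    intro T hT
    rw [hsatur T]
    have : {w | ∃ k, (∀ n, k ∈ V n) ∧ ∃ c ∈ T, ∃ h ∈ H, w = k * c * h}
        = ⋃ (k : G) (_ : ∀ n, k ∈ V n) (h : G) (_ : h ∈ H), (fun c => k * c * h) '' T := by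
      ext w
      simp only [mem_setOf_eq, mem_iUnion, mem_image]
      constructor
      · rintro ⟨k, hk, c, hc, h, hh, rfl⟩; exact ⟨k, hk, h, hh, c, hc, rfl⟩
      · rintro ⟨k, hk, h, hh, c, hc, rfl⟩; exact ⟨k, hk, c, hc, h, hh, rfl⟩
    rw [this]
    refine isOpen_iUnion fun k => isOpen_iUnion fun hk =>
      isOpen_iUnion fun h => isOpen_iUnion fun hh => ?_
    exact ((isOpenMap_mul_right h).comp (isOpenMap_mul_left k)) T hT
  -- the quotient topology coincides with the uniform topology
  have hcore_open : ∀ S : Set (Quotient s), IsOpen[core.toTopologicalSpace] S ↔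
      ∀ z ∈ S, ∃ n, {y | (z, y) ∈ D n} ⊆ S := by
    intro S
    show (∀ z ∈ S, S ∈ comap (Prod.mk z) 𝒰) ↔ _
    refine forall₂_congr fun z _ => ?_
    rw [(hbasis.comap (Prod.mk z)).mem_iff]
    simp only [true_and]
    rfl
  have htopeq : (instTopologicalSpaceQuotient : TopologicalSpace (Quotient s))
      = core.toTopologicalSpace := by
    rw [TopologicalSpace.ext_iff]
    intro S
    rw [hcore_open S]
    constructor
    · -- quotient-open implies uniform-open
      intro hS z hzS
      obtain ⟨g₀, rfl⟩ := Quotient.exists_rep z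
      have hU'o : IsOpen (Q ⁻¹' S) := hS.preimage hQM.continuous
      have hg₀ : g₀ ∈ Q ⁻¹' S := hzS
      have hKUH : IsOpen (Q ⁻¹' (Q '' (Q ⁻¹' S))) := hsatur_open _ hU'o
      have claim1 : ∃ n, ∀ v ∈ V n, v * g₀ ∈ Q ⁻¹' (Q '' (Q ⁻¹' S)) := by
        by_contra hcon
        push_neg at hcon
        choose v hv hvn using hcon
        obtain ⟨φ, hφ, p, hp, htend⟩ := seqV v hv
        have htend' : Tendsto (fun n => v (φ n) * g₀) atTop (𝓝 (p * g₀)) :=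
          htend.mul_const g₀
        have hmem : p * g₀ ∈ Q ⁻¹' (Q '' (Q ⁻¹' S)) := by
          rw [hsatur]
          exact ⟨p, hp, g₀, hg₀, 1, H.one_mem, by group⟩
        obtain ⟨n, hn⟩ := (htend'.eventually (hKUH.eventually_mem hmem)).exists
        exact hvn (φ n) hn
      obtain ⟨n, hn⟩ := claim1
      refine ⟨n + 1, ?_⟩
      rintro y hy
      obtain ⟨v, hv, h, hh, rfl⟩ := hD_rep n g₀ y hy
      have hvg : v * g₀ ∈ Q ⁻¹' (Q '' (Q ⁻¹' S)) := hn v hv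
      rw [hsatur] at hvg
      obtain ⟨k, hk, c, hc, h', hh', hw⟩ := hvg
      have : Q (v * g₀ * h) = Q c := by
        refine (hQ_eq ⟨k, hk, h' * h, H.mul_mem hh' hh, ?_⟩).symm
        rw [hw]; group
      rw [this]
      exact hc
    · -- uniform-open implies quotient-open
      intro hS
      rw [← hQM.isOpen_preimage]
      rw [isOpen_iff_mem_nhds]
      intro g hg
      obtain ⟨n, hn⟩ := hS (Q g) hg
      have hmem : (fun v => v * g) '' V n ∈ 𝓝 g :=
        (isOpenMap_mul_right g (V n) (hVo n)).mem_nhds ⟨1, hV1 n, one_mul g⟩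
      refine mem_of_superset hmem ?_
      rintro w ⟨v, hv, rfl⟩
      exact hn (⟨g, v * g, rfl, rfl, v, hv, 1, H.one_mem, by group⟩ : (Q g, Q (v * g)) ∈ D n)
  letI u : UniformSpace (Quotient s) := UniformSpace.ofCoreEq core _ htopeq
  have h𝓤 : 𝓤 (Quotient s) = 𝒰 := rfl
  have hbasisU : (𝓤 (Quotient s)).HasBasis (fun _ : ℕ => True) D := h𝓤 ▸ hbasis
  have hnhds : ∀ z : Quotient s, (𝓝 z).HasBasis (fun _ : ℕ => True)
      (fun n => {y | (z, y) ∈ D n}) := fun z => nhds_basis_uniformity' hbasisU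
  -- the map
  let f : G ⧸ H → Quotient s := fun a => Quotient.liftOn' a Q
    (fun a b hab => hQ_eq ⟨1, fun n => hV1 n, a⁻¹ * b,
      (QuotientGroup.leftRel_apply).1 hab, by group⟩)
  have hfπ : ∀ g : G, f (g : G ⧸ H) = Q g := fun g => rfl
  have hcont_f : Continuous f := by
    rw [isQuotientMap_quotient_mk'.continuous_iff]
    exact hQM.continuous
  -- image description
  have himg : ∀ S : Set (G ⧸ H), f '' S = Q '' ((QuotientGroup.mk : G → G ⧸ H) ⁻¹' S) := by
    intro S
    ext z
    constructor
    · rintro ⟨a, haS, rfl⟩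
      obtain ⟨g, rfl⟩ := QuotientGroup.mk_surjective a
      exact ⟨g, haS, rfl⟩
    · rintro ⟨g, hg, rfl⟩
      exact ⟨(g : G ⧸ H), hg, rfl⟩
  have hsat : ∀ S : Set (G ⧸ H), ∀ c ∈ (QuotientGroup.mk : G → G ⧸ H) ⁻¹' S,
      ∀ h ∈ H, c * h ∈ (QuotientGroup.mk : G → G ⧸ H) ⁻¹' S := by
    intro S c hc h hh
    show (QuotientGroup.mk (c * h) : G ⧸ H) ∈ S
    rwa [QuotientGroup.mk_mul_of_mem c hh]
  -- open map
  have hopen_f : IsOpenMap f := by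
    intro O hO
    rw [himg O]
    rw [← hQM.isOpen_preimage]
    exact hsatur_open _ (hO.preimage continuous_quotient_mk')
  -- closed map
  have hclosed_f : IsClosedMap f := by
    intro C hC
    rw [himg C]
    set C' : Set G := (QuotientGroup.mk : G → G ⧸ H) ⁻¹' C with hC'def
    have hC'c : IsClosed C' := hC.preimage continuous_quotient_mk'
    rw [← hQM.isClosed_preimage]
    rw [hsatur C']
    rw [← isOpen_compl_iff, isOpen_iff_mem_nhds]
    intro g hg
    have claim2 : ∃ n, ∀ v ∈ V n, ∀ c ∈ C', g ≠ v * c := by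
      by_contra hcon
      push_neg at hcon
      choose v hv c hc hgeq using hcon
      obtain ⟨φ, hφ, p, hp, htend⟩ := seqV v hv
      have htendc : Tendsto (fun n => c (φ n)) atTop (𝓝 (p⁻¹ * g)) := by
        have : (fun n => c (φ n)) = fun n => (v (φ n))⁻¹ * g := by
          funext n
          rw [hgeq (φ n)]; group
        rw [this]
        exact (htend.inv).mul_const g
      have hpg : p⁻¹ * g ∈ C' :=
        hC'c.mem_of_tendsto htendc (Eventually.of_forall fun n => hc (φ n))
      exact hg ⟨p, hp, p⁻¹ * g, hpg, 1, H.one_mem, by group⟩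
    obtain ⟨n, hn⟩ := claim2
    have hmem : (fun v => v * g) '' V (n+1) ∈ 𝓝 g :=
      (isOpenMap_mul_right g (V (n+1)) (hVo (n+1))).mem_nhds ⟨1, hV1 (n+1), one_mul g⟩
    refine mem_of_superset hmem ?_
    rintro w ⟨v₀, hv₀, rfl⟩
    rintro ⟨k, hk, c, hc, h, hh, hweq⟩
    have hweq' : v₀ * g = k * c * h := hweq
    refine hn (v₀⁻¹ * k) (hVmul n v₀⁻¹ (hVinv (n+1) v₀ hv₀) k (hk (n+1)))
      (c * h) (hsat C c hc h hh) ?_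
    have hgid : g = v₀⁻¹ * (v₀ * g) := by group
    rw [hgid, hweq']; group
  -- metrizability
  haveI hcg : (𝓤 (Quotient s)).IsCountablyGenerated := hbasisU.isCountablyGenerated
  haveI ht0 : T0Space (Quotient s) := by
    rw [t0Space_iff_uniformity]
    intro x y hxy
    obtain ⟨g, rfl⟩ := Quotient.exists_rep x
    obtain ⟨y₀, rfl⟩ := Quotient.exists_rep y
    have hrep : ∀ n, ∃ v ∈ V n, ∃ h ∈ H, y₀ = v * g * h := fun n =>
      hD_rep2 n g y₀ (hxy _ (h𝓤 ▸ hDmem (n+2)))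
    choose v hv h hh hy using hrep
    obtain ⟨φ, hφ, p, hp, htend⟩ := seqV v hv
    have htendh : Tendsto (fun n => h (φ n)) atTop (𝓝 ((p * g)⁻¹ * y₀)) := by
      have : (fun n => h (φ n)) = fun n => (v (φ n) * g)⁻¹ * y₀ := by
        funext n
        rw [hy (φ n)]; group
      rw [this]
      exact ((htend.mul_const g).inv).mul_const y₀
    have hmemH : (p * g)⁻¹ * y₀ ∈ H :=
      hH.mem_of_tendsto htendh (Eventually.of_forall fun n => hh (φ n))
    exact hQ_eq ⟨p, hp, (p * g)⁻¹ * y₀, hmemH, by group⟩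
  have hmetr : TopologicalSpace.MetrizableSpace (Quotient s) := UniformSpace.metrizableSpace
  -- sequential compactness of preimages
  have hseq : ∀ F : Set (Quotient s), IsSeqCompact F → IsSeqCompact (f ⁻¹' F) := by
    intro F hF a ha
    obtain ⟨m, hmF, φ₁, hφ₁, hconv₁⟩ := hF (x := fun j => f (a j)) ha
    obtain ⟨g₀, rfl⟩ := Quotient.exists_rep m
    have hev : ∀ n : ℕ, ∀ᶠ j in atTop, (Q g₀, f (a (φ₁ j))) ∈ D (n+2) := by
      intro n
      exact hconv₁.eventually ((hnhds (Q g₀)).mem_of_mem (i := n+2) trivial)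
    obtain ⟨ψ, hψ, hP⟩ := extraction_forall_of_eventually hev
    set g : ℕ → G := fun n => (a (φ₁ (ψ n))).out with hgdef
    have hout : ∀ n, (QuotientGroup.mk (g n) : G ⧸ H) = a (φ₁ (ψ n)) := fun n =>
      QuotientGroup.out_eq' _
    have hgD : ∀ n, (Q g₀, Q (g n)) ∈ D (n+2) := by
      intro n
      have := hP n
      rwa [← hout n, hfπ] at this
    have hrep : ∀ n, ∃ v ∈ V n, ∃ h ∈ H, g n = v * g₀ * h := fun n =>
      hD_rep2 n g₀ (g n) (hgD n)
    choose v hv h hh hgn using hrep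
    obtain ⟨φ₂, hφ₂, p, hp, htend⟩ := seqV v hv
    refine ⟨((p * g₀ : G) : G ⧸ H), ?_, φ₁ ∘ ψ ∘ φ₂, hφ₁.comp (hψ.comp hφ₂), ?_⟩
    · show f ((p * g₀ : G) : G ⧸ H) ∈ F
      rw [hfπ]
      rwa [← hQ_eq (show R g₀ (p * g₀) from ⟨p, hp, 1, H.one_mem, by group⟩)]
    · have hteq : (a ∘ (φ₁ ∘ ψ ∘ φ₂)) = fun j =>
          (QuotientGroup.mk (v (φ₂ j) * g₀) : G ⧸ H) := by
        funext j
        show a (φ₁ (ψ (φ₂ j))) = _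
        rw [← hout (φ₂ j), hgn (φ₂ j), QuotientGroup.mk_mul_of_mem _ (hh (φ₂ j))]
      rw [hteq]
      have htend' : Tendsto (fun j => v (φ₂ j) * g₀) atTop (𝓝 (p * g₀)) := htend.mul_const g₀
      exact (continuous_quotient_mk'.tendsto (p * g₀)).comp htend'
  exact ⟨Quotient s, instTopologicalSpaceQuotient, hmetr, f, hcont_f, hopen_f, hclosed_f, hseq⟩


/-- if a topological group `G` has a strong q-point and `H` is a closed
subgroup, then `G/H` admits a continuous, open and closed map `f` onto a metrizable
space such that preimages of sequentially compact sets are sequentially compact. -/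
theorem stmt_16 {G : Type u} [Group G] [TopologicalSpace G] [IsTopologicalGroup G] [T2Space G]
    (hq : ∃ (x : G) (U : ℕ → Set G), (∀ n, IsOpen (U n) ∧ x ∈ U n) ∧
      ∀ u : ℕ → G, (∀ n, u n ∈ U n) →
        ∃ φ : ℕ → ℕ, StrictMono φ ∧ ∃ p : G, Tendsto (u ∘ φ) atTop (𝓝 p))
    (H : Subgroup G) (hH : IsClosed (H : Set G)) :
    ∃ (M : Type u) (_ : TopologicalSpace M) (_ : TopologicalSpace.MetrizableSpace M)
      (f : G ⧸ H → M), Continuous f ∧ IsOpenMap f ∧ IsClosedMap f ∧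
        ∀ F : Set M, IsSeqCompact F → IsSeqCompact (f ⁻¹' F) := by
  obtain ⟨x, U, hU, hconv⟩ := hq
  set W : ℕ → Set G := fun n => (fun g => x * g) ⁻¹' U n with hWdef
  have hWo : ∀ n, IsOpen (W n) := fun n =>
    (hU n).1.preimage (continuous_const.mul continuous_id)
  have hW1 : ∀ n, (1:G) ∈ W n := fun n => by
    show x * 1 ∈ U n
    simpa using (hU n).2
  obtain ⟨V, hVo, hV1, hVinv, hVmul, hVW, hVsucc⟩ := q16_V W hWo hW1
  have hVadd : ∀ k m, V (m + k) ⊆ V m := by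
    intro k
    induction k with
    | zero => exact fun m => subset_rfl
    | succ k ih => exact fun m => (hVsucc (m + k)).trans (ih m)
  have hVanti : ∀ {m n}, m ≤ n → V n ⊆ V m := by
    intro m n hmn
    obtain ⟨k, rfl⟩ := Nat.exists_eq_add_of_le hmn
    exact hVadd k m
  have seqV : ∀ v : ℕ → G, (∀ n, v n ∈ V n) →
      ∃ φ : ℕ → ℕ, StrictMono φ ∧ ∃ p, (∀ n, p ∈ V n) ∧ Tendsto (v ∘ φ) atTop (𝓝 p) := by
    intro v hvV
    obtain ⟨φ, hφ, p₀, htend₀⟩ := hconv (fun n => x * v n) (fun n => hVW n (hvV n))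
    have htend : Tendsto (v ∘ φ) atTop (𝓝 (x⁻¹ * p₀)) := by
      have h1 : Tendsto (fun n => x⁻¹ * (((fun n => x * v n) ∘ φ) n)) atTop
          (𝓝 (x⁻¹ * p₀)) := htend₀.const_mul x⁻¹
      simpa only [Function.comp_def, inv_mul_cancel_left] using h1
    refine ⟨φ, hφ, x⁻¹ * p₀, fun m => ?_, htend⟩
    have hev : ∀ᶠ n in atTop, (v ∘ φ) n ∈ V (m+1) := by
      filter_upwards [eventually_ge_atTop (m+1)] with n hn
      exact hVanti (le_trans hn hφ.le_apply) (hvV (φ n))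
    have hcl : x⁻¹ * p₀ ∈ closure (V (m+1)) := mem_closure_of_tendsto htend hev
    obtain ⟨y, hyO, hyV⟩ := mem_closure_iff_nhds.1 hcl
      ((fun w => w * (x⁻¹ * p₀)) '' V (m+1))
      ((isOpenMap_mul_right _ _ (hVo (m+1))).mem_nhds ⟨1, hV1 (m+1), one_mul _⟩)
    obtain ⟨v₁, hv₁, he⟩ := hyO
    have he' : v₁ * (x⁻¹ * p₀) = y := he
    have hmem : v₁⁻¹ * y ∈ V m := hVmul m v₁⁻¹ (hVinv (m+1) v₁ hv₁) y hyV
    have hz : x⁻¹ * p₀ = v₁⁻¹ * y := by rw [← he']; group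
    rwa [← hz] at hmem
  exact q16_main V hVo hV1 hVinv hVmul hVanti seqV H hH
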